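/- In the smooth RCSN setting, suppose φ is bounded below on E, that x̄ is an accumulation point of (x_k), and that φ satisfies the Kurdyka–Łojasiewicz property at x̄ with ψ(t) = M t^{1−θ} for some M > 0 and θ ∈ (0, 1/2]: there exists η > 0 such that M(1−θ)(φ(x) − φ(x̄))^{−θ} · ‖∇φ(x)‖ ≥ 1 for all x with ‖x − x̄‖ ≤ η and φ(x̄) < φ(x) < φ(x̄) + η. Then (x_k) converges to x̄ at least R-linearly: there exist c > 0 and μ ∈ (0,1) such that ‖x_k − x̄‖ ≤ c μ^k for all k. -/

import Mathlib

open scoped RealInnerProductSpace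
open Filter Topology

set_option maxHeartbeats 4000000

lemma locLip_on_compact {E F : Type*} [NormedAddCommGroup E] [NormedAddCommGroup F]
    {f : E → F} (hf : LocallyLipschitz f) {s : Set E} (hs : IsCompact s) :
    ∃ L : ℝ, 0 ≤ L ∧ ∀ a ∈ s, ∀ b ∈ s, ‖f a - f b‖ ≤ L * ‖a - b‖ := by
  have H : ∀ p : E, ∃ (K : NNReal) (ε : ℝ), 0 < ε ∧ LipschitzOnWith K f (Metric.ball p ε) := by
    intro p
    obtain ⟨K, t, ht, hl⟩ := hf p
    obtain ⟨ε, hε, hsub⟩ := Metric.mem_nhds_iff.1 ht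
    exact ⟨K, ε, hε, hl.mono hsub⟩
  choose K ε hε hlip using H
  rcases s.eq_empty_or_nonempty with rfl | ⟨a0, ha0⟩
  · exact ⟨0, le_refl 0, by simp⟩
  obtain ⟨t, hts, hcov⟩ := hs.elim_nhds_subcover (fun p => Metric.ball p (ε p / 2))
    (fun p _ => Metric.ball_mem_nhds p (by have := hε p; linarith))
  have htne : t.Nonempty := by
    rcases Set.mem_iUnion₂.1 (hcov ha0) with ⟨p, hp, _⟩
    exact ⟨p, hp⟩
  set δ : ℝ := t.inf' htne (fun p => ε p / 2) with hδdef
  have hδ : 0 < δ := by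
    rw [hδdef, Finset.lt_inf'_iff]
    intro p _; have := hε p; linarith
  set D : ℝ := Metric.diam (f '' s) with hDdef
  have hD0 : 0 ≤ D := Metric.diam_nonneg
  have hDb : ∀ a ∈ s, ∀ b ∈ s, ‖f a - f b‖ ≤ D := by
    intro a ha b hb
    rw [← dist_eq_norm]
    exact Metric.dist_le_diam_of_mem ((hs.image hf.continuous).isBounded)
      (Set.mem_image_of_mem f ha) (Set.mem_image_of_mem f hb)
  set Km : ℝ := t.sup' htne (fun p => (K p : ℝ)) with hKm
  have hKm0 : 0 ≤ Km := le_trans (K htne.choose).coe_nonneg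
    (Finset.le_sup' (fun p => (K p : ℝ)) htne.choose_spec)
  refine ⟨max Km (D / δ), le_trans hKm0 (le_max_left _ _), ?_⟩
  intro a ha b hb
  rcases lt_or_ge (dist a b) δ with hab | hab
  · rcases Set.mem_iUnion₂.1 (hcov ha) with ⟨p, hp, hap⟩
    have hδp : δ ≤ ε p / 2 := Finset.inf'_le _ hp
    have hbp : b ∈ Metric.ball p (ε p) := by
      have h1 : dist a p < ε p / 2 := Metric.mem_ball.1 hap
      have h2 : dist b p ≤ dist b a + dist a p := dist_triangle _ _ _
      rw [Metric.mem_ball]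
      rw [dist_comm] at hab
      linarith
    have hap' : a ∈ Metric.ball p (ε p) :=
      Metric.ball_subset_ball (by linarith) hap
    have := (lipschitzOnWith_iff_dist_le_mul.1 (hlip p)) a hap' b hbp
    rw [dist_eq_norm] at this
    have hK : (K p : ℝ) ≤ Km := Finset.le_sup' (fun p => (K p : ℝ)) hp
    calc ‖f a - f b‖ ≤ (K p : ℝ) * dist a b := this
      _ ≤ max Km (D / δ) * ‖a - b‖ := by
          rw [dist_eq_norm] at *
          exact mul_le_mul (le_trans hK (le_max_left _ _)) (le_refl _) (norm_nonneg _)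
            (le_trans hKm0 (le_max_left _ _))
  · have h1 : ‖f a - f b‖ ≤ D := hDb a ha b hb
    have h2 : D ≤ (D / δ) * ‖a - b‖ := by
      rw [← dist_eq_norm]
      calc D = (D / δ) * δ := by field_simp
        _ ≤ (D / δ) * dist a b := by
            apply mul_le_mul_of_nonneg_left hab (by positivity)
    calc ‖f a - f b‖ ≤ (D / δ) * ‖a - b‖ := le_trans h1 h2
      _ ≤ max Km (D / δ) * ‖a - b‖ :=
          mul_le_mul_of_nonneg_right (le_max_right _ _) (norm_nonneg _)

theorem rcsn_Rlinear_rate_KL_exponent_le_half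
    {E : Type*} [NormedAddCommGroup E] [InnerProductSpace ℝ E] [FiniteDimensional ℝ E]
    (g h : E → ℝ) (hg : ContDiff ℝ 2 g) (hh : Differentiable ℝ h)
    (hhl : LocallyLipschitz (gradient h))
    (φ : E → ℝ) (hφ : ∀ y, φ y = g y - h y)
    (σ β ζ tmin ρmax : ℝ)
    (hσ : σ ∈ Set.Ioo (0 : ℝ) 1) (hβ : β ∈ Set.Ioo (0 : ℝ) 1)
    (hζ : 0 < ζ) (htmin : 0 < tmin) (hρmax : 0 ≤ ρmax)
    (x d : ℕ → E) (τ ρ : ℕ → ℝ)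
    (hwne : ∀ k, gradient φ (x k) ≠ 0)
    (hρk : ∀ k, ρ k ∈ Set.Icc 0 ρmax)
    (hdne : ∀ k, d k ≠ 0)
    (hdir : ∀ k, fderiv ℝ (gradient g) (x k) (d k) + ρ k • d k = -(gradient φ (x k)))
    (hdesc : ∀ k, ⟪gradient φ (x k), d k⟫ ≤ -ζ * ‖d k‖ ^ 2)
    (hτpos : ∀ k, 0 < τ k)
    (hls : ∀ k, φ (x k + τ k • d k) ≤ φ (x k) + σ * τ k * ⟪gradient φ (x k), d k⟫)
    (hbt : ∀ k, tmin ≤ τ k ∨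
      φ (x k) + σ * (τ k / β) * ⟪gradient φ (x k), d k⟫ < φ (x k + (τ k / β) • d k))
    (hupd : ∀ k, x (k + 1) = x k + τ k • d k)
    (hbdd : BddBelow (Set.range φ))
    (xb : E)
    (hacc : ∃ s : ℕ → ℕ, StrictMono s ∧ Tendsto (fun j => x (s j)) atTop (𝓝 xb))
    (M θ : ℝ) (hM : 0 < M) (hθ : θ ∈ Set.Ioc (0 : ℝ) (1 / 2))
    (η : ℝ) (hη : 0 < η)
    (hKL : ∀ y : E, ‖y - xb‖ ≤ η → φ xb < φ y → φ y < φ xb + η →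
      1 ≤ M * (1 - θ) * (φ y - φ xb) ^ (-θ) * ‖gradient φ y‖) :
    ∃ c > (0 : ℝ), ∃ μ ∈ Set.Ioo (0 : ℝ) 1, ∀ k, ‖x k - xb‖ ≤ c * μ ^ k := by
  obtain ⟨hσ0, hσ1⟩ := hσ
  obtain ⟨hβ0, hβ1⟩ := hβ
  obtain ⟨hθ0, hθ2⟩ := hθ
  have hθ1 : θ < 1 := lt_of_le_of_lt hθ2 (by norm_num)
  obtain ⟨sq, hsm, hxs⟩ := hacc
  -- basic differentiability facts
  have hgd : Differentiable ℝ g := hg.differentiable (by norm_num)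
  have hφd : Differentiable ℝ φ := by
    have : φ = fun y => g y - h y := funext hφ
    rw [this]; exact hgd.sub hh
  have hφc : Continuous φ := hφd.continuous
  have hgradeq : ∀ z, gradient φ z = gradient g z - gradient h z := by
    intro z
    have hφe : φ = fun y => g y - h y := funext hφ
    have hfd : fderiv ℝ φ z = fderiv ℝ g z - fderiv ℝ h z := by
      rw [hφe]; exact fderiv_sub (hgd z) (hh z)
    show (InnerProductSpace.toDual ℝ E).symm (fderiv ℝ φ z) = _
    rw [hfd, map_sub]; rfl
  -- gradient g is C¹
  have hgg1 : ContDiff ℝ 1 (gradient g) := by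
    have h2 : ContDiff ℝ 1 (fderiv ℝ g) := hg.fderiv_right (m := 1) (by norm_num)
    have he : gradient g = fun z => (InnerProductSpace.toDual ℝ E).symm (fderiv ℝ g z) := rfl
    rw [he]
    exact (InnerProductSpace.toDual ℝ E).symm.contDiff.comp h2
  -- inner product formula for fderiv of φ
  have hfφ : ∀ z, fderiv ℝ φ z = InnerProductSpace.toDual ℝ E (gradient φ z) := by
    intro z
    rw [show gradient φ z = (InnerProductSpace.toDual ℝ E).symm (fderiv ℝ φ z) from rfl]
    simp
  -- monotone values
  have hdec : ∀ k, φ (x (k+1)) ≤ φ (x k) - σ * ζ * (τ k * ‖d k‖ ^ 2) := by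
    intro k
    have h1 := hls k
    have h2 := hdesc k
    have hτ := hτpos k
    have h3 : σ * τ k * ⟪gradient φ (x k), d k⟫ ≤ σ * τ k * (-ζ * ‖d k‖^2) :=
      mul_le_mul_of_nonneg_left h2 (by positivity)
    rw [← hupd k] at h1
    linarith
  have hpos : ∀ k, 0 < σ * ζ * (τ k * ‖d k‖ ^ 2) := by
    intro k
    have := hτpos k
    have h2 : 0 < ‖d k‖ := norm_pos_iff.2 (hdne k)
    positivity
  have hanti : ∀ j k, j ≤ k → φ (x k) ≤ φ (x j) := by
    intro j k hjk
    induction k, hjk using Nat.le_induction with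
    | base => exact le_refl _
    | succ n hn ih => exact le_trans (le_trans (hdec n) (by have := hpos n; linarith)) ih
  have hybdd : BddBelow (Set.range (fun k => φ (x k))) := by
    apply hbdd.mono
    rintro _ ⟨k, rfl⟩
    exact ⟨x k, rfl⟩
  have hlim : Tendsto (fun k => φ (x k)) atTop (𝓝 (⨅ k, φ (x k))) :=
    tendsto_atTop_ciInf (fun j k hjk => hanti j k hjk) hybdd
  have hφlim : Tendsto (fun j => φ (x (sq j))) atTop (𝓝 (φ xb)) :=
    (hφc.tendsto xb).comp hxs
  have hℓ : (⨅ k, φ (x k)) = φ xb :=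
    tendsto_nhds_unique (hlim.comp hsm.tendsto_atTop) hφlim
  have hgt : ∀ k, φ xb < φ (x k) := by
    intro k
    have h1 : φ (x (k+1)) < φ (x k) := lt_of_le_of_lt (hdec k) (by have := hpos k; linarith)
    have h2 : φ xb ≤ φ (x (k+1)) := by
      rw [← hℓ]; exact ciInf_le hybdd (k+1)
    linarith
  set Δ : ℕ → ℝ := fun k => φ (x k) - φ xb with hΔdef
  have hΔpos : ∀ k, 0 < Δ k := fun k => sub_pos.2 (hgt k)
  have hΔdec : ∀ k, σ * ζ * (τ k * ‖d k‖ ^ 2) ≤ Δ k - Δ (k+1) := by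
    intro k
    have := hdec k
    simp only [hΔdef]
    linarith
  -- Hessian bound on the closed ball
  obtain ⟨A, hA0, hA⟩ : ∃ A : ℝ, 0 ≤ A ∧
      ∀ z ∈ Metric.closedBall xb η, ‖fderiv ℝ (gradient g) z‖ ≤ A := by
    have hcont : Continuous (fun z => fderiv ℝ (gradient g) z) :=
      hgg1.continuous_fderiv one_ne_zero
    obtain ⟨A, hA⟩ :=
      (isCompact_closedBall xb η).exists_bound_of_continuousOn hcont.continuousOn
    exact ⟨max A 0, le_max_right _ _, fun z hz => le_trans (hA z hz) (le_max_left _ _)⟩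
  -- Lipschitz bound for gradient φ on the closed ball
  obtain ⟨L, hL1, hL⟩ : ∃ L : ℝ, 1 ≤ L ∧ ∀ a ∈ Metric.closedBall xb η,
      ∀ b ∈ Metric.closedBall xb η, ‖gradient φ a - gradient φ b‖ ≤ L * ‖a - b‖ := by
    obtain ⟨L1, hL10, hL1⟩ := locLip_on_compact hgg1.locallyLipschitz (isCompact_closedBall xb η)
    obtain ⟨L2, hL20, hL2⟩ := locLip_on_compact hhl (isCompact_closedBall xb η)
    refine ⟨L1 + L2 + 1, by linarith, fun a ha b hb => ?_⟩
    rw [hgradeq a, hgradeq b]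
    have key : gradient g a - gradient h a - (gradient g b - gradient h b)
        = (gradient g a - gradient g b) - (gradient h a - gradient h b) := by abel
    rw [key]
    calc ‖(gradient g a - gradient g b) - (gradient h a - gradient h b)‖
        ≤ ‖gradient g a - gradient g b‖ + ‖gradient h a - gradient h b‖ := norm_sub_le _ _
      _ ≤ L1 * ‖a - b‖ + L2 * ‖a - b‖ := add_le_add (hL1 a ha b hb) (hL2 a ha b hb)
      _ ≤ (L1 + L2 + 1) * ‖a - b‖ := by linarith [norm_nonneg (a - b)]
  have hL0 : 0 < L := lt_of_lt_of_le one_pos hL1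
  -- constants
  set C : ℝ := A + ρmax + 1 with hCdef
  have hC0 : 0 < C := by positivity
  have hwd : ∀ k, ‖x k - xb‖ ≤ η → ‖gradient φ (x k)‖ ≤ C * ‖d k‖ := by
    intro k hk
    have h1 := hdir k
    have h2 : gradient φ (x k) = -(fderiv ℝ (gradient g) (x k) (d k) + ρ k • d k) := by
      rw [h1, neg_neg]
    have hball : x k ∈ Metric.closedBall xb η := by
      rw [Metric.mem_closedBall, dist_eq_norm]; exact hk
    have hops : ‖fderiv ℝ (gradient g) (x k) (d k)‖ ≤ A * ‖d k‖ :=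
      le_trans ((fderiv ℝ (gradient g) (x k)).le_opNorm (d k))
        (mul_le_mul_of_nonneg_right (hA _ hball) (norm_nonneg _))
    have hρs : ‖ρ k • d k‖ ≤ ρmax * ‖d k‖ := by
      rw [norm_smul, Real.norm_eq_abs, abs_of_nonneg (hρk k).1]
      exact mul_le_mul_of_nonneg_right (hρk k).2 (norm_nonneg _)
    rw [h2, norm_neg]
    calc ‖fderiv ℝ (gradient g) (x k) (d k) + ρ k • d k‖
        ≤ ‖fderiv ℝ (gradient g) (x k) (d k)‖ + ‖ρ k • d k‖ := norm_add_le _ _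
      _ ≤ A * ‖d k‖ + ρmax * ‖d k‖ := add_le_add hops hρs
      _ ≤ C * ‖d k‖ := by rw [hCdef]; linarith [norm_nonneg (d k)]
  set K₁ : ℝ := C * (M * (1 - θ)) with hK₁def
  have hK₁0 : 0 < K₁ := by
    have : 0 < 1 - θ := by linarith
    positivity
  set K₂ : ℝ := K₁ / (σ * ζ) with hK₂def
  have hK₂0 : 0 < K₂ := by positivity
  set t₀ : ℝ := min tmin (β * (1 - σ) * ζ / L) with ht₀def
  have ht₀0 : 0 < t₀ := by
    apply lt_min htmin
    have : 0 < 1 - σ := by linarith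
    positivity
  set κ : ℝ := min (σ * ζ * t₀ / K₁ ^ 2) (1/2) with hκdef
  have hκ0 : 0 < κ := by
    apply lt_min (by positivity) (by norm_num)
  have hκ2 : κ ≤ 1/2 := min_le_right _ _
  set q : ℝ := 1 - κ with hqdef
  have hq0 : 0 < q := by simp only [hqdef]; linarith
  have hq1 : q < 1 := by simp only [hqdef]; linarith
  set ν : ℝ := Real.sqrt q with hνdef
  have hν0 : 0 < ν := Real.sqrt_pos.2 hq0
  have hν1 : ν < 1 := by
    rw [hνdef, show (1:ℝ) = Real.sqrt 1 from (Real.sqrt_one).symm]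
    exact Real.sqrt_lt_sqrt hq0.le hq1
  set δ : ℝ := min (min 1 (η/2)) (min ((β * η / (2 * K₂)) ^ 2) ((η * (1 - ν) / (8 * K₂)) ^ 2))
    with hδdef
  have hδ0 : 0 < δ := by
    have h1 : 0 < 1 - ν := by linarith
    apply lt_min (lt_min one_pos (by linarith)) (lt_min (by positivity) (by positivity))
  have hδ1 : δ ≤ 1 := le_trans (min_le_left _ _) (min_le_left _ _)
  have hδη : δ ≤ η / 2 := le_trans (min_le_left _ _) (min_le_right _ _)
  have hsqδ1 : Real.sqrt δ ≤ β * η / (2 * K₂) := by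
    have h1 : δ ≤ (β * η / (2 * K₂)) ^ 2 := le_trans (min_le_right _ _) (min_le_left _ _)
    calc Real.sqrt δ ≤ Real.sqrt ((β * η / (2 * K₂)) ^ 2) := Real.sqrt_le_sqrt h1
      _ = β * η / (2 * K₂) := Real.sqrt_sq (by positivity)
  have hsqδ2 : Real.sqrt δ ≤ η * (1 - ν) / (8 * K₂) := by
    have h1 : δ ≤ (η * (1 - ν) / (8 * K₂)) ^ 2 := le_trans (min_le_right _ _) (min_le_right _ _)
    have h2 : 0 < 1 - ν := by linarith
    calc Real.sqrt δ ≤ Real.sqrt ((η * (1 - ν) / (8 * K₂)) ^ 2) := Real.sqrt_le_sqrt h1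
      _ = η * (1 - ν) / (8 * K₂) := Real.sqrt_sq (by positivity)
  set B : ℝ := K₂ * Real.sqrt δ / (1 - ν) with hBdef
  have hν1' : 0 < 1 - ν := by linarith
  have hB0 : 0 ≤ B := by positivity
  have hBsmall : B ≤ η / 8 := by
    rw [hBdef, div_le_iff₀ hν1']
    calc K₂ * Real.sqrt δ ≤ K₂ * (η * (1 - ν) / (8 * K₂)) :=
          mul_le_mul_of_nonneg_left hsqδ2 hK₂0.le
      _ = η / 8 * (1 - ν) := by field_simp
  -- core per-step estimate
  have core : ∀ k, ‖x k - xb‖ ≤ η/2 → Δ k ≤ δ →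
      (τ k * ‖d k‖ ≤ K₂ * Real.sqrt (Δ k)) ∧ Δ (k+1) ≤ q * Δ k := by
    intro k hk1 hk2
    have hΔk := hΔpos k
    have hΔ1 : Δ k ≤ 1 := le_trans hk2 hδ1
    have hΔη : Δ k < η := lt_of_le_of_lt hk2 (lt_of_le_of_lt hδη (by linarith))
    have hxη : ‖x k - xb‖ ≤ η := le_trans hk1 (by linarith)
    have hxball : x k ∈ Metric.closedBall xb η := by
      rw [Metric.mem_closedBall, dist_eq_norm]; exact hxη
    have hkl' : 1 ≤ M * (1 - θ) * (Δ k) ^ (-θ) * ‖gradient φ (x k)‖ := by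
      have h1 : φ (x k) < φ xb + η := by
        have h2 : Δ k = φ (x k) - φ xb := rfl
        linarith [hΔη, h2 ▸ hΔη]
      simpa only [hΔdef] using hKL (x k) hxη (hgt k) h1
    set w := gradient φ (x k) with hw
    have hwpos : 0 < ‖w‖ := norm_pos_iff.2 (hwne k)
    have hdpos : 0 < ‖d k‖ := norm_pos_iff.2 (hdne k)
    have hrp : Δ k ^ (θ:ℝ) * Δ k ^ (-θ) = 1 := by
      rw [← Real.rpow_add hΔk]; simp
    have hθnn : (0:ℝ) ≤ Δ k ^ (θ:ℝ) := Real.rpow_nonneg hΔk.le θ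
    have hwlb : Δ k ^ (θ:ℝ) ≤ M * (1 - θ) * ‖w‖ := by
      calc Δ k ^ (θ:ℝ) = Δ k ^ (θ:ℝ) * 1 := (mul_one _).symm
        _ ≤ Δ k ^ (θ:ℝ) * (M * (1 - θ) * (Δ k) ^ (-θ) * ‖w‖) :=
            mul_le_mul_of_nonneg_left hkl' hθnn
        _ = (Δ k ^ (θ:ℝ) * Δ k ^ (-θ)) * (M * (1 - θ) * ‖w‖) := by ring
        _ = M * (1 - θ) * ‖w‖ := by rw [hrp, one_mul]
    have hM1θ : (0:ℝ) ≤ M * (1 - θ) := mul_nonneg hM.le (by linarith)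
    have hdlb : Δ k ^ (θ:ℝ) ≤ K₁ * ‖d k‖ := by
      calc Δ k ^ (θ:ℝ) ≤ M * (1 - θ) * ‖w‖ := hwlb
        _ ≤ M * (1 - θ) * (C * ‖d k‖) := mul_le_mul_of_nonneg_left (hwd k hxη) hM1θ
        _ = K₁ * ‖d k‖ := by rw [hK₁def]; ring
    have hsd2 : σ * ζ * (τ k * ‖d k‖ ^ 2) ≤ Δ k :=
      le_trans (hΔdec k) (by have := hΔpos (k+1); linarith)
    have hθp : 0 < Δ k ^ (θ:ℝ) := Real.rpow_pos_of_pos hΔk θ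
    have hpow : Δ k ^ ((1:ℝ)-θ) * Δ k ^ (θ:ℝ) = Δ k := by
      rw [← Real.rpow_add hΔk]; simp
    have hτd : τ k * ‖d k‖ ≤ K₂ * Δ k ^ ((1:ℝ)-θ) := by
      have key : τ k * ‖d k‖ * Δ k ^ (θ:ℝ) ≤ (K₂ * Δ k ^ ((1:ℝ)-θ)) * Δ k ^ (θ:ℝ) := by
        have h1 : τ k * ‖d k‖ * Δ k ^ (θ:ℝ) ≤ τ k * ‖d k‖ * (K₁ * ‖d k‖) :=
          mul_le_mul_of_nonneg_left hdlb (mul_pos (hτpos k) hdpos).le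
        have h3 : (K₂ * Δ k ^ ((1:ℝ)-θ)) * Δ k ^ (θ:ℝ) = K₂ * Δ k := by
          rw [mul_assoc, hpow]
        rw [h3, hK₂def, div_mul_eq_mul_div, le_div_iff₀ (by positivity)]
        have e1 : τ k * ‖d k‖ * Δ k ^ (θ:ℝ) * (σ * ζ)
            ≤ τ k * ‖d k‖ * (K₁ * ‖d k‖) * (σ * ζ) :=
          mul_le_mul_of_nonneg_right h1 (mul_pos hσ0 hζ).le
        have e2 : τ k * ‖d k‖ * (K₁ * ‖d k‖) * (σ * ζ)
            = K₁ * (σ * ζ * (τ k * ‖d k‖ ^ 2)) := by ring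
        have e3 : K₁ * (σ * ζ * (τ k * ‖d k‖ ^ 2)) ≤ K₁ * Δ k :=
          mul_le_mul_of_nonneg_left hsd2 hK₁0.le
        linarith
      exact le_of_mul_le_mul_right key hθp
    have hexp : Δ k ^ ((1:ℝ)-θ) ≤ Δ k ^ ((1:ℝ)/2) :=
      Real.rpow_le_rpow_of_exponent_ge hΔk hΔ1 (by linarith)
    have hsq : Δ k ^ ((1:ℝ)/2) = Real.sqrt (Δ k) := (Real.sqrt_eq_rpow _).symm
    have hi : τ k * ‖d k‖ ≤ K₂ * Real.sqrt (Δ k) := by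
      refine le_trans hτd ?_
      rw [← hsq]
      exact mul_le_mul_of_nonneg_left hexp hK₂0.le
    refine ⟨hi, ?_⟩
    -- lower bound on the step size
    have hτlb : t₀ ≤ τ k := by
      rcases hbt k with hcase | hcase
      · exact le_trans (min_le_left _ _) hcase
      · set s' : ℝ := τ k / β with hs'
        have hs'0 : 0 < s' := div_pos (hτpos k) hβ0
        set y : E := x k + s' • d k with hy
        have hsd' : s' * ‖d k‖ ≤ η / 2 := by
          have h1 : s' * ‖d k‖ = (τ k * ‖d k‖)/β := by rw [hs']; ring
          rw [h1, div_le_iff₀ hβ0]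
          calc τ k * ‖d k‖ ≤ K₂ * Real.sqrt (Δ k) := hi
            _ ≤ K₂ * Real.sqrt δ :=
                mul_le_mul_of_nonneg_left (Real.sqrt_le_sqrt hk2) hK₂0.le
            _ ≤ K₂ * (β * η/(2*K₂)) := mul_le_mul_of_nonneg_left hsqδ1 hK₂0.le
            _ = η/2 * β := by field_simp
        have hyball : y ∈ Metric.closedBall xb η := by
          rw [Metric.mem_closedBall, dist_eq_norm, hy]
          have he : x k + s' • d k - xb = (x k - xb) + s' • d k := by abel
          rw [he]
          calc ‖(x k - xb) + s' • d k‖ ≤ ‖x k - xb‖ + ‖s' • d k‖ := norm_add_le _ _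
            _ ≤ η/2 + s' * ‖d k‖ := by
                rw [norm_smul, Real.norm_eq_abs, abs_of_pos hs'0]
                exact add_le_add hk1 le_rfl
            _ ≤ η := by linarith
        set S : Set E := Metric.closedBall (x k) (s' * ‖d k‖) ∩ Metric.closedBall xb η with hS
        have hconv : Convex ℝ S := (convex_closedBall _ _).inter (convex_closedBall _ _)
        have hxS : x k ∈ S := ⟨Metric.mem_closedBall_self (by positivity), hxball⟩
        have hyx : ‖y - x k‖ = s' * ‖d k‖ := by
          rw [hy]
          have he : x k + s' • d k - x k = s' • d k := by abel
          rw [he, norm_smul, Real.norm_eq_abs, abs_of_pos hs'0]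
        have hyS : y ∈ S := by
          refine ⟨?_, hyball⟩
          rw [Metric.mem_closedBall, dist_eq_norm, hyx]
        have hGderiv : ∀ z ∈ S, HasFDerivWithinAt (fun z => φ z - ⟪w, z⟫)
            (fderiv ℝ φ z - InnerProductSpace.toDual ℝ E w) S z := by
          intro z hz
          have h1 : HasFDerivAt φ (fderiv ℝ φ z) z := (hφd z).hasFDerivAt
          have h2 : HasFDerivAt (fun z : E => ⟪w, z⟫) (InnerProductSpace.toDual ℝ E w) z :=
            (InnerProductSpace.toDual ℝ E w).hasFDerivAt
          exact (h1.sub h2).hasFDerivWithinAt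
        have hGbound : ∀ z ∈ S, ‖fderiv ℝ φ z - InnerProductSpace.toDual ℝ E w‖
            ≤ L * (s' * ‖d k‖) := by
          intro z hz
          have h1 : fderiv ℝ φ z - InnerProductSpace.toDual ℝ E w
              = InnerProductSpace.toDual ℝ E (gradient φ z - w) := by
            rw [map_sub, hfφ z]
          rw [h1, LinearIsometryEquiv.norm_map]
          calc ‖gradient φ z - w‖ ≤ L * ‖z - x k‖ := hL z hz.2 (x k) hxball
            _ ≤ L * (s' * ‖d k‖) := by
                apply mul_le_mul_of_nonneg_left ?_ hL0.le
                rw [← dist_eq_norm]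
                exact Metric.mem_closedBall.1 hz.1
        have hmv := hconv.norm_image_sub_le_of_norm_hasFDerivWithin_le hGderiv hGbound hxS hyS
        rw [hyx] at hmv
        have hmv' : φ y - ⟪w, y⟫ - (φ (x k) - ⟪w, x k⟫) ≤ L * (s' * ‖d k‖) * (s' * ‖d k‖) :=
          le_trans (le_abs_self _) (by rw [← Real.norm_eq_abs]; exact hmv)
        have hinner : ⟪w, y⟫ - ⟪w, x k⟫ = s' * ⟪w, d k⟫ := by
          rw [← inner_sub_right, hy]
          have he : x k + s' • d k - x k = s' • d k := by abel
          rw [he, real_inner_smul_right]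
        have hfail : φ (x k) + σ * s' * ⟪w, d k⟫ < φ y := hcase
        have hwdneg : ⟪w, d k⟫ ≤ -ζ * ‖d k‖^2 := hdesc k
        have ha : φ y - φ (x k) - s' * ⟪w, d k⟫ ≤ L * (s' * ‖d k‖) * (s' * ‖d k‖) := by
          linarith [hmv', hinner]
        have hc : (1 - σ) * s' * (-⟪w, d k⟫) < L * (s' * ‖d k‖) * (s' * ‖d k‖) := by
          linarith [ha, hfail]
        have hd' : (1 - σ) * s' * (ζ * ‖d k‖^2) ≤ (1 - σ) * s' * (-⟪w, d k⟫) :=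
          mul_le_mul_of_nonneg_left (by linarith) (mul_nonneg (by linarith) hs'0.le)
        have he2 : ((1 - σ) * ζ) * (s' * ‖d k‖^2) < (L * s') * (s' * ‖d k‖^2) := by
          linarith [hd', hc]
        have hLs2 : (1 - σ) * ζ < L * s' :=
          lt_of_mul_lt_mul_right he2 (by positivity)
        have hfin : β * (1 - σ) * ζ / L < τ k := by
          rw [div_lt_iff₀ hL0]
          have e2 : ((1 - σ) * ζ) * β < (L * s') * β := mul_lt_mul_of_pos_right hLs2 hβ0
          have e3 : (L * s') * β = τ k * L := by rw [hs']; field_simp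
          linarith
        exact le_trans (min_le_right _ _) hfin.le
    -- contraction
    have hsum : Δ k ≤ K₁^2 * ‖d k‖^2 := by
      have h1 : Δ k ^ (θ + θ) = Δ k ^ (θ:ℝ) * Δ k ^ (θ:ℝ) := Real.rpow_add hΔk θ θ
      have h2 : Δ k ^ ((1:ℝ)) ≤ Δ k ^ (θ+θ) :=
        Real.rpow_le_rpow_of_exponent_ge hΔk hΔ1 (by linarith)
      calc Δ k = Δ k ^ (1:ℝ) := (Real.rpow_one _).symm
        _ ≤ Δ k ^ (θ+θ) := h2
        _ = Δ k ^ (θ:ℝ) * Δ k ^ (θ:ℝ) := h1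
        _ ≤ (K₁ * ‖d k‖) * (K₁ * ‖d k‖) := mul_le_mul hdlb hdlb hθnn (by positivity)
        _ = K₁^2 * ‖d k‖^2 := by ring
    have h1 := hΔdec k
    have h2 : σ*ζ*(t₀*‖d k‖^2) ≤ σ*ζ*(τ k*‖d k‖^2) := by
      apply mul_le_mul_of_nonneg_left ?_ (by positivity)
      exact mul_le_mul_of_nonneg_right hτlb (by positivity)
    have h3 : κ * Δ k ≤ σ*ζ*(t₀*‖d k‖^2) := by
      have hκle : κ ≤ σ*ζ*t₀/K₁^2 := min_le_left _ _
      calc κ * Δ k ≤ (σ*ζ*t₀/K₁^2) * Δ k := mul_le_mul_of_nonneg_right hκle hΔk.le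
        _ ≤ (σ*ζ*t₀/K₁^2) * (K₁^2*‖d k‖^2) :=
            mul_le_mul_of_nonneg_left hsum (by positivity)
        _ = σ*ζ*(t₀*‖d k‖^2) := by field_simp
    simp only [hqdef]
    linarith
  -- find a good starting index
  obtain ⟨N, hN1, hN2⟩ : ∃ N : ℕ, ‖x N - xb‖ ≤ η/4 ∧ Δ N ≤ δ := by
    have h1 : Tendsto (fun j => ‖x (sq j) - xb‖) atTop (𝓝 0) := by
      have h0 : Tendsto (fun j => x (sq j) - xb) atTop (𝓝 (xb - xb)) := hxs.sub_const xb
      rw [sub_self] at h0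
      simpa using h0.norm
    have h2 : Tendsto (fun j => Δ (sq j)) atTop (𝓝 0) := by
      have h0 : Tendsto (fun j => φ (x (sq j)) - φ xb) atTop (𝓝 (φ xb - φ xb)) :=
        hφlim.sub_const (φ xb)
      rw [sub_self] at h0
      simpa [hΔdef] using h0
    have e1 : ∀ᶠ j in atTop, ‖x (sq j) - xb‖ < η/4 :=
      h1.eventually_lt_const (by positivity)
    have e2 : ∀ᶠ j in atTop, Δ (sq j) < δ := h2.eventually_lt_const hδ0
    obtain ⟨j, hj1, hj2⟩ := (e1.and e2).exists
    exact ⟨sq j, hj1.le, hj2.le⟩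
  have hsqgeo : ∀ n : ℕ, Real.sqrt (q ^ n) = ν ^ n := by
    intro n
    induction n with
    | zero => simp
    | succ m ih =>
      rw [pow_succ, pow_succ, Real.sqrt_mul (by positivity), ih, hνdef]
  -- invariant
  have hprep : ∀ n : ℕ, Δ (N + n) ≤ δ * q ^ n → ‖x (N + n) - xb‖ ≤ η/2 →
      ‖x (N + n + 1) - x (N + n)‖ ≤ B * (1 - ν) * ν ^ n ∧ Δ (N + n + 1) ≤ q * Δ (N + n) := by
    intro n ih1 hball
    have hqn1 : q ^ n ≤ 1 := pow_le_one₀ hq0.le hq1.le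
    have hΔn : Δ (N + n) ≤ δ := by
      calc Δ (N + n) ≤ δ * q ^ n := ih1
        _ ≤ δ * 1 := mul_le_mul_of_nonneg_left hqn1 hδ0.le
        _ = δ := mul_one _
    obtain ⟨hstep, hcontr⟩ := core (N + n) hball hΔn
    have hsqb : Real.sqrt (Δ (N + n)) ≤ Real.sqrt δ * ν ^ n := by
      calc Real.sqrt (Δ (N + n)) ≤ Real.sqrt (δ * q ^ n) := Real.sqrt_le_sqrt ih1
        _ = Real.sqrt δ * Real.sqrt (q ^ n) := Real.sqrt_mul hδ0.le _
        _ = Real.sqrt δ * ν ^ n := by rw [hsqgeo]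
    have hBν : K₂ * Real.sqrt δ = B * (1 - ν) := by rw [hBdef]; field_simp
    have hτb : τ (N + n) * ‖d (N + n)‖ ≤ B * (1 - ν) * ν ^ n := by
      calc τ (N + n) * ‖d (N + n)‖ ≤ K₂ * Real.sqrt (Δ (N + n)) := hstep
        _ ≤ K₂ * (Real.sqrt δ * ν ^ n) := mul_le_mul_of_nonneg_left hsqb hK₂0.le
        _ = (K₂ * Real.sqrt δ) * ν ^ n := by ring
        _ = B * (1 - ν) * ν ^ n := by rw [hBν]
    have hnorm : ‖x (N + n + 1) - x (N + n)‖ = τ (N + n) * ‖d (N + n)‖ := by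
      rw [hupd (N + n)]
      have he : x (N + n) + τ (N + n) • d (N + n) - x (N + n) = τ (N + n) • d (N + n) := by
        abel
      rw [he, norm_smul, Real.norm_eq_abs, abs_of_pos (hτpos _)]
    exact ⟨by rw [hnorm]; exact hτb, hcontr⟩
  have hinv : ∀ m : ℕ, Δ (N + m) ≤ δ * q ^ m ∧
      ‖x (N + m) - xb‖ ≤ η/4 + B * (1 - ν ^ m) := by
    intro m
    induction m with
    | zero =>
      refine ⟨by simpa using hN2, ?_⟩
      simpa using hN1.trans (by linarith)
    | succ n ih =>
      obtain ⟨ih1, ih2⟩ := ih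
      have hνn0 : (0:ℝ) ≤ ν ^ n := by positivity
      have hνn1 : ν ^ n ≤ 1 := pow_le_one₀ hν0.le hν1.le
      have hB2 : B * (1 - ν ^ n) ≤ B := by
        calc B * (1 - ν ^ n) ≤ B * 1 := mul_le_mul_of_nonneg_left (by linarith) hB0
          _ = B := mul_one _
      have hball : ‖x (N + n) - xb‖ ≤ η/2 := by linarith [hBsmall]
      obtain ⟨hstep, hcontr⟩ := hprep n ih1 hball
      constructor
      · calc Δ (N + (n + 1)) = Δ (N + n + 1) := by ring_nf
          _ ≤ q * Δ (N + n) := hcontr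
          _ ≤ q * (δ * q ^ n) := mul_le_mul_of_nonneg_left ih1 hq0.le
          _ = δ * q ^ (n + 1) := by ring
      · have htri : ‖x (N + n + 1) - xb‖
            ≤ ‖x (N + n + 1) - x (N + n)‖ + ‖x (N + n) - xb‖ := by
          have he : x (N + n + 1) - xb
              = (x (N + n + 1) - x (N + n)) + (x (N + n) - xb) := by abel
          rw [he]; exact norm_add_le _ _
        have hgoal : ‖x (N + n + 1) - xb‖ ≤ η/4 + B * (1 - ν ^ (n+1)) := by
          calc ‖x (N + n + 1) - xb‖
              ≤ B * (1 - ν) * ν ^ n + (η/4 + B * (1 - ν ^ n)) := by linarith [htri, hstep, ih2]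
            _ = η/4 + B * (1 - ν ^ (n+1)) := by ring
        show ‖x (N + n + 1) - xb‖ ≤ η/4 + B * (1 - ν ^ (n+1))
        exact hgoal
  have hstepb : ∀ n : ℕ, ‖x (N + n + 1) - x (N + n)‖ ≤ B * (1 - ν) * ν ^ n := by
    intro n
    obtain ⟨ih1, ih2⟩ := hinv n
    have hνn1 : ν ^ n ≤ 1 := pow_le_one₀ hν0.le hν1.le
    have hνn0 : (0:ℝ) ≤ ν ^ n := by positivity
    have hB2 : B * (1 - ν ^ n) ≤ B := by
      calc B * (1 - ν ^ n) ≤ B * 1 := mul_le_mul_of_nonneg_left (by linarith) hB0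
        _ = B := mul_one _
    exact (hprep n ih1 (by linarith [hBsmall])).1
  -- geometric tail estimate
  have hdist : ∀ a b : ℕ, a ≤ b → ‖x (N + b) - x (N + a)‖ ≤ B * ν ^ a - B * ν ^ b := by
    intro a b hab
    induction b, hab using Nat.le_induction with
    | base => simp
    | succ n hn ih =>
      have h1 := hstepb n
      have htri : ‖x (N + (n+1)) - x (N + a)‖
          ≤ ‖x (N + n + 1) - x (N + n)‖ + ‖x (N + n) - x (N + a)‖ := by
        have he : x (N + (n+1)) - x (N + a)
            = (x (N + n + 1) - x (N + n)) + (x (N + n) - x (N + a)) := by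
          rw [Nat.add_succ]; abel
        rw [he]; exact norm_add_le _ _
      calc ‖x (N + (n+1)) - x (N + a)‖
          ≤ B * (1 - ν) * ν ^ n + (B * ν ^ a - B * ν ^ n) := by linarith
        _ = B * ν ^ a - B * ν ^ (n+1) := by ring
  have htail : ∀ a : ℕ, ‖x (N + a) - xb‖ ≤ B * ν ^ a := by
    intro a
    have hconv : Tendsto (fun j => ‖x (N + a) - x (sq j)‖) atTop (𝓝 ‖x (N + a) - xb‖) :=
      ((tendsto_const_nhds.sub hxs).norm : _)
    apply le_of_tendsto hconv
    filter_upwards [eventually_ge_atTop (N + a)] with j hj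
    have hsj : N + a ≤ sq j := le_trans hj hsm.le_apply
    have hb : sq j = N + (sq j - N) := by omega
    have hab : a ≤ sq j - N := by omega
    have hnn : (0:ℝ) ≤ B * ν ^ (sq j - N) := by positivity
    calc ‖x (N + a) - x (sq j)‖ = ‖x (N + (sq j - N)) - x (N + a)‖ := by
          rw [← hb, norm_sub_rev]
      _ ≤ B * ν ^ a - B * ν ^ (sq j - N) := hdist a (sq j - N) hab
      _ ≤ B * ν ^ a := by linarith
  -- conclude
  have hNne : (Finset.range (N+1)).Nonempty := ⟨0, by simp⟩
  set R : ℝ := Finset.sup' (Finset.range (N+1)) hNne (fun j => ‖x j - xb‖) with hRdef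
  have hR0 : 0 ≤ R :=
    le_trans (norm_nonneg (x 0 - xb)) (Finset.le_sup' (fun j => ‖x j - xb‖) (by simp))
  have hνN : (0:ℝ) < ν ^ N := by positivity
  set c : ℝ := (R + B)/ν^N + 1 with hcdef
  have hc0 : 0 < c := by positivity
  have hcν : c * ν ^ N = R + B + ν ^ N := by
    rw [hcdef]; field_simp
  refine ⟨c, hc0, ν, ⟨hν0, hν1⟩, ?_⟩
  intro k
  rcases le_or_gt k N with hk | hk
  · have h1 : ‖x k - xb‖ ≤ R :=
      Finset.le_sup' (fun j => ‖x j - xb‖) (Finset.mem_range.2 (by omega))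
    have h2 : ν ^ N ≤ ν ^ k := pow_le_pow_of_le_one hν0.le hν1.le hk
    calc ‖x k - xb‖ ≤ R := h1
      _ ≤ c * ν ^ N := by rw [hcν]; linarith
      _ ≤ c * ν ^ k := mul_le_mul_of_nonneg_left h2 hc0.le
  · have hk' : k = N + (k - N) := by omega
    have h1 : ‖x k - xb‖ ≤ B * ν ^ (k - N) := by
      have h0 := htail (k - N)
      rwa [← hk'] at h0
    have h3 : B ≤ c * ν ^ N := by rw [hcν]; linarith
    have hpows : ν ^ k = ν ^ N * ν ^ (k - N) := by
      have he : N + (k - N) = k := by omega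
      rw [← pow_add, he]
    calc ‖x k - xb‖ ≤ B * ν ^ (k - N) := h1
      _ ≤ (c * ν ^ N) * ν ^ (k - N) :=
          mul_le_mul_of_nonneg_right h3 (by positivity)
      _ = c * ν ^ k := by rw [hpows]; ring
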